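/- Fix a prime p and a positive integer n ≥ p, and write the base-p expansion of n as n = Σ_{i=1}^{k} a_i p^{b_i}, where 0 < a_i ≤ p-1 for each i and 0 ≤ b_1 < b_2 < ... < b_k. Then Π_{i=1}^{k} (a_i! · p^{b_i}) ≤ p^(n/2); equivalently, (Π_{i=1}^{k} a_i! · p^{b_i})^2 ≤ p^n. -/

import Mathlib

private lemma aux_two_mul_le_pow (p b : ℕ) (hp : 2 ≤ p) (hb : 1 ≤ b) : 2 * b ≤ p ^ b := by
  induction b with
  | zero => omega
  | succ m ih =>
    rcases Nat.eq_zero_or_pos m with rfl | hm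
    · simpa using hp
    · have h := ih hm
      have h2 : 2 ≤ p ^ m := le_trans hp (Nat.le_self_pow (by omega) p)
      calc 2 * (m + 1) = 2 * m + 2 := by ring
        _ ≤ p ^ m + p ^ m := by omega
        _ = 2 * p ^ m := by ring
        _ ≤ p * p ^ m := Nat.mul_le_mul_right _ hp
        _ = p ^ (m + 1) := by ring

private lemma aux_L2 (p b : ℕ) (hp : 2 ≤ p) (hb : 1 ≤ b) : p + 2 * b ≤ p ^ b + 3 := by
  induction b with
  | zero => omega
  | succ m ih =>
    rcases Nat.eq_zero_or_pos m with rfl | hm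
    · have hq : p ^ (0 + 1) = p := by ring
      omega
    · have h := ih hm
      have h2 : 2 ≤ p ^ m := le_trans hp (Nat.le_self_pow (by omega) p)
      have h3 : 2 * p ^ m ≤ p ^ (m + 1) := by
        calc 2 * p ^ m ≤ p * p ^ m := Nat.mul_le_mul_right _ hp
          _ = p ^ (m + 1) := by ring
      omega

private lemma aux_LA (p a b : ℕ) (hp : 2 ≤ p) (ha : 1 ≤ a) (hb : 1 ≤ b) :
    2 * ((a - 1) + b) ≤ a * p ^ b := by
  have h1 : 2 * b ≤ p ^ b := aux_two_mul_le_pow p b hp hb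
  have h2 : 2 ≤ p ^ b := le_trans hp (Nat.le_self_pow (by omega) p)
  have h3 : (a - 1) * 2 ≤ (a - 1) * p ^ b := Nat.mul_le_mul_left _ h2
  have h4 : (a - 1) * p ^ b + p ^ b = a * p ^ b := by
    have : (a - 1) + 1 = a := by omega
    calc (a - 1) * p ^ b + p ^ b = ((a - 1) + 1) * p ^ b := by ring
      _ = a * p ^ b := by rw [this]
  omega

private lemma aux_LB (p a0 a b : ℕ) (hp : 2 ≤ p) (ha0 : 1 ≤ a0) (ha0' : a0 ≤ p - 1)
    (ha : 1 ≤ a) (hb : 1 ≤ b) :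
    2 * (a0 - 1) + 2 * ((a - 1) + b) ≤ a0 + a * p ^ b := by
  have h1 : p + 2 * b ≤ p ^ b + 3 := aux_L2 p b hp hb
  have h2 : 2 ≤ p ^ b := le_trans hp (Nat.le_self_pow (by omega) p)
  have h3 : (a - 1) * 2 ≤ (a - 1) * p ^ b := Nat.mul_le_mul_left _ h2
  have h4 : (a - 1) * p ^ b + p ^ b = a * p ^ b := by
    have : (a - 1) + 1 = a := by omega
    calc (a - 1) * p ^ b + p ^ b = ((a - 1) + 1) * p ^ b := by ring
      _ = a * p ^ b := by rw [this]
  omega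

private lemma aux_fact_le (a : ℕ) : a.factorial ≤ a ^ (a - 1) := by
  induction a with
  | zero => simp
  | succ m ih =>
    rcases Nat.eq_zero_or_pos m with rfl | hm
    · simp
    · have h1 : m ^ (m - 1) ≤ (m + 1) ^ (m - 1) := Nat.pow_le_pow_left (by omega) _
      calc (m + 1).factorial = (m + 1) * m.factorial := rfl
        _ ≤ (m + 1) * (m + 1) ^ (m - 1) := Nat.mul_le_mul_left _ (le_trans ih h1)
        _ = (m + 1) ^ (m - 1 + 1) := by ring
        _ = (m + 1) ^ m := by rw [Nat.sub_add_cancel hm]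

/-- Lemma 3.2 (conclusion): let `n = Σ_{i<k} a i * p ^ b i` be the base-`p` expansion of
`n ≥ p` (so `0 < a i ≤ p - 1` and `b` strictly increasing).  Then
`Π_{i<k} (a i)! * p ^ (b i) ≤ p ^ (n/2)`, equivalently its square is at most `p ^ n`. -/
theorem base_p_centralizer_order_bound
    (p n k : ℕ) (a b : ℕ → ℕ) (hp : p.Prime) (hn : p ≤ n)
    (ha : ∀ i < k, 0 < a i ∧ a i ≤ p - 1)
    (hb : ∀ i j, i < j → j < k → b i < b j)
    (hsum : n = ∑ i ∈ Finset.range k, a i * p ^ b i) :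
    (∏ i ∈ Finset.range k, (a i).factorial * p ^ b i) ^ 2 ≤ p ^ n := by
  have hp2 : 2 ≤ p := hp.two_le
  have hk : 0 < k := by
    by_contra h
    have : k = 0 := by omega
    subst this
    simp at hsum
    omega
  have hb1 : ∀ i, 1 ≤ i → i < k → 1 ≤ b i := fun i h1 h2 =>
    Nat.lt_of_le_of_lt (Nat.zero_le (b 0)) (hb 0 i h1 h2)
  -- Step 2 : exponent inequality
  have key : ∑ i ∈ Finset.range k, 2 * ((a i - 1) + b i) ≤ n := by
    rw [hsum]
    by_cases h0 : 1 ≤ b 0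
    · apply Finset.sum_le_sum
      intro i hi
      rw [Finset.mem_range] at hi
      have hbi : 1 ≤ b i := by
        rcases Nat.eq_zero_or_pos i with rfl | hipos
        · exact h0
        · exact hb1 i hipos hi
      exact aux_LA p (a i) (b i) hp2 (ha i hi).1 hbi
    · have hb0 : b 0 = 0 := by omega
      have hk2 : 2 ≤ k := by
        by_contra h
        have hk1 : k = 1 := by omega
        subst hk1
        rw [Finset.sum_range_one, hb0, pow_zero, mul_one] at hsum
        have := ha 0 (by omega)
        omega
      obtain ⟨m, rfl⟩ : ∃ m, k = m + 2 := ⟨k - 2, by omega⟩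
      have split : ∀ f : ℕ → ℕ, ∑ i ∈ Finset.range (m + 2), f i =
          f 0 + (∑ i ∈ Finset.range m, f (i + 1)) + f (m + 1) := by
        intro f
        rw [Finset.sum_range_succ, Finset.sum_range_succ']
        ring
      rw [split, split]
      have hmid : ∑ i ∈ Finset.range m, 2 * ((a (i + 1) - 1) + b (i + 1)) ≤
          ∑ i ∈ Finset.range m, a (i + 1) * p ^ b (i + 1) := by
        apply Finset.sum_le_sum
        intro i hi
        rw [Finset.mem_range] at hi
        exact aux_LA p (a (i + 1)) (b (i + 1)) hp2 (ha (i + 1) (by omega)).1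
          (hb1 (i + 1) (by omega) (by omega))
      have hends : 2 * ((a 0 - 1) + b 0) + 2 * ((a (m + 1) - 1) + b (m + 1)) ≤
          a 0 * p ^ b 0 + a (m + 1) * p ^ b (m + 1) := by
        rw [hb0, pow_zero, mul_one, Nat.add_zero]
        exact aux_LB p (a 0) (a (m + 1)) (b (m + 1)) hp2 (ha 0 (by omega)).1
          (ha 0 (by omega)).2 (ha (m + 1) (by omega)).1 (hb1 (m + 1) (by omega) (by omega))
      omega
  -- Step 1 : product bound
  have hprod : (∏ i ∈ Finset.range k, (a i).factorial * p ^ b i) ^ 2 ≤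
      p ^ (∑ i ∈ Finset.range k, 2 * ((a i - 1) + b i)) := by
    rw [← Finset.prod_pow, ← Finset.prod_pow_eq_pow_sum]
    apply Finset.prod_le_prod'
    intro i hi
    rw [Finset.mem_range] at hi
    have ha1 := (ha i hi).1
    have ha2 : a i ≤ p := by have := (ha i hi).2; omega
    have hfac : (a i).factorial ≤ p ^ (a i - 1) :=
      le_trans (aux_fact_le (a i)) (Nat.pow_le_pow_left ha2 _)
    calc ((a i).factorial * p ^ b i) ^ 2 ≤ (p ^ (a i - 1) * p ^ b i) ^ 2 :=
          Nat.pow_le_pow_left (Nat.mul_le_mul_right _ hfac) 2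
      _ = (p ^ ((a i - 1) + b i)) ^ 2 := by rw [pow_add]
      _ = p ^ (2 * ((a i - 1) + b i)) := by rw [← pow_mul, Nat.mul_comm]
  exact le_trans hprod (Nat.pow_le_pow_right (by omega) key)
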